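/- Let 𝒱 be a v-transform with fulcrum δ ∈ (0,1), generator Ψ differentiable with strictly positive derivative, conditional down probability Δ and stochastic inversion function 𝒱⁻¹_s. Let V and W be independent random variables, each uniformly distributed on [0,1], and set U = 𝒱⁻¹_s(V, W). Then 𝒱(U) = V almost surely and U is uniformly distributed on [0,1]. -/

import Mathlib

/-!
STATEMENT 9: stochastic inversion of a v-transform: if `V, W` are independent
uniform variables on `[0,1]` and `U = 𝒱⁻¹ₛ(V, W)`, then `𝒱(U) = V` a.s. and `U`
is uniform on `[0,1]`.
-/

open Set MeasureTheory
set_option linter.unusedSectionVars false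
set_option maxHeartbeats 1000000

/-- The v-transform with fulcrum `δ` and generator `Ψ` (with inverse `Ψinv`):
`𝒱(u) = (1-u) - (1-δ)·Ψ(u/δ)` for `u ≤ δ` and `𝒱(u) = u - δ·Ψinv((1-u)/(1-δ))`
for `u > δ`. -/
noncomputable def vt (δ : ℝ) (Ψ Ψinv : ℝ → ℝ) (u : ℝ) : ℝ :=
  if u ≤ δ then (1 - u) - (1 - δ) * Ψ (u / δ)
  else u - δ * Ψinv ((1 - u) / (1 - δ))

/-- Left-branch inverse `𝒱⁻¹(v) = inf {u ∈ [0,1] : 𝒱 u = v}`. -/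
noncomputable def vtInv (V : ℝ → ℝ) (v : ℝ) : ℝ :=
  sInf {u | u ∈ Set.Icc (0:ℝ) 1 ∧ V u = v}

/-- Conditional down probability `Δ(v) = -1 / 𝒱′(𝒱⁻¹(v))`. -/
noncomputable def vtDelta (V : ℝ → ℝ) (v : ℝ) : ℝ :=
  -1 / deriv V (vtInv V v)

/-- Stochastic inversion function of a v-transform:
`𝒱⁻¹ₛ(v,w) = 𝒱⁻¹(v)` if `w ≤ Δ(v)`, and `v + 𝒱⁻¹(v)` otherwise. -/
noncomputable def vtSInv (V : ℝ → ℝ) (v w : ℝ) : ℝ :=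
  if w ≤ vtDelta V v then vtInv V v else v + vtInv V v

structure VTHyp (δ : ℝ) (Ψ Ψinv : ℝ → ℝ) : Prop where
  hδ : δ ∈ Set.Ioo (0:ℝ) 1
  hΨc : ContinuousOn Ψ (Set.Icc 0 1)
  hΨm : StrictMonoOn Ψ (Set.Icc 0 1)
  hΨ0 : Ψ 0 = 0
  hΨ1 : Ψ 1 = 1
  hΨinv : ∀ x ∈ Set.Icc (0:ℝ) 1, Ψinv (Ψ x) = x ∧ Ψ (Ψinv x) = x
  hΨd : ∀ x ∈ Set.Ioo (0:ℝ) 1, DifferentiableAt ℝ Ψ x ∧ 0 < deriv Ψ x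

namespace VTHyp

variable {δ : ℝ} {Ψ Ψinv : ℝ → ℝ} (h : VTHyp δ Ψ Ψinv)
include h

lemma hδ0 : 0 < δ := h.hδ.1
lemma hδ1 : δ < 1 := h.hδ.2

lemma psi_mem {x : ℝ} (hx : x ∈ Icc (0:ℝ) 1) : Ψ x ∈ Icc (0:ℝ) 1 := by
  constructor
  · rcases eq_or_lt_of_le hx.1 with h0 | h0
    · simp [← h0, h.hΨ0]
    · have := h.hΨm (by simp) hx h0
      simpa [h.hΨ0] using this.le
  · rcases eq_or_lt_of_le hx.2 with h1 | h1
    · simp [h1, h.hΨ1]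
    · have := h.hΨm hx (by simp) h1
      simpa [h.hΨ1] using this.le

lemma div_mem {u : ℝ} (hu : u ∈ Icc (0:ℝ) δ) : u / δ ∈ Icc (0:ℝ) 1 := by
  constructor
  · exact div_nonneg hu.1 h.hδ0.le
  · exact (div_le_one h.hδ0).2 hu.2

lemma vt_left {u : ℝ} (hu : u ≤ δ) : vt δ Ψ Ψinv u = (1 - u) - (1 - δ) * Ψ (u / δ) :=
  if_pos hu

lemma vt_right {u : ℝ} (hu : ¬ u ≤ δ) : vt δ Ψ Ψinv u = u - δ * Ψinv ((1 - u) / (1 - δ)) :=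
  if_neg hu

lemma vt_zero : vt δ Ψ Ψinv 0 = 1 := by
  rw [h.vt_left h.hδ0.le]
  simp [h.hΨ0]

lemma vt_delta : vt δ Ψ Ψinv δ = 0 := by
  rw [h.vt_left le_rfl]
  rw [div_self h.hδ0.ne', h.hΨ1]
  ring

lemma contL : ContinuousOn (vt δ Ψ Ψinv) (Icc 0 δ) := by
  have : ContinuousOn (fun u => (1 - u) - (1 - δ) * Ψ (u / δ)) (Icc 0 δ) := by
    apply ContinuousOn.sub
    · exact (continuous_const.sub continuous_id).continuousOn
    · apply ContinuousOn.mul continuousOn_const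
      exact h.hΨc.comp (continuousOn_id.div_const δ) (fun u hu => h.div_mem hu)
  exact this.congr (fun u hu => h.vt_left hu.2)

lemma antiL : StrictAntiOn (vt δ Ψ Ψinv) (Icc 0 δ) := by
  intro u1 h1 u2 h2 h12
  rw [h.vt_left h1.2, h.vt_left h2.2]
  have hΨle : Ψ (u1 / δ) ≤ Ψ (u2 / δ) := by
    rcases eq_or_lt_of_le ((div_le_div_iff_of_pos_right h.hδ0).2 h12.le) with he | hlt
    · rw [he]
    · exact (h.hΨm (h.div_mem h1) (h.div_mem h2) hlt).le
  have h1δ : (0:ℝ) < 1 - δ := by linarith [h.hδ1]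
  nlinarith

/-- existence of a left-branch solution -/
lemma exists_left {v : ℝ} (hv : v ∈ Icc (0:ℝ) 1) :
    ∃ u ∈ Icc (0:ℝ) δ, vt δ Ψ Ψinv u = v := by
  have := intermediate_value_Icc' h.hδ0.le h.contL
  rw [h.vt_zero, h.vt_delta] at this
  exact this hv

lemma isLeast {u : ℝ} (hu : u ∈ Icc (0:ℝ) δ) :
    IsLeast {u' | u' ∈ Icc (0:ℝ) 1 ∧ vt δ Ψ Ψinv u' = vt δ Ψ Ψinv u} u := by
  constructor
  · exact ⟨⟨hu.1, hu.2.trans h.hδ1.le⟩, rfl⟩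
  · rintro u' ⟨hu', he⟩
    by_contra hlt
    push_neg at hlt
    have hu'δ : u' ∈ Icc (0:ℝ) δ := ⟨hu'.1, hlt.le.trans hu.2⟩
    exact absurd he (h.antiL hu'δ hu hlt).ne'

lemma vtInv_vt {u : ℝ} (hu : u ∈ Icc (0:ℝ) δ) :
    vtInv (vt δ Ψ Ψinv) (vt δ Ψ Ψinv u) = u :=
  (h.isLeast hu).csInf_eq

lemma vtInv_mem {v : ℝ} (hv : v ∈ Icc (0:ℝ) 1) :
    vtInv (vt δ Ψ Ψinv) v ∈ Icc (0:ℝ) δ ∧ vt δ Ψ Ψinv (vtInv (vt δ Ψ Ψinv) v) = v := by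
  obtain ⟨u, hu, he⟩ := h.exists_left hv
  rw [← he, h.vtInv_vt hu]
  exact ⟨hu, rfl⟩

lemma g_zero : vtInv (vt δ Ψ Ψinv) 0 = δ := by
  have := h.vtInv_vt (⟨h.hδ0.le, le_rfl⟩ : δ ∈ Icc (0:ℝ) δ)
  rwa [h.vt_delta] at this

lemma g_one : vtInv (vt δ Ψ Ψinv) 1 = 0 := by
  have := h.vtInv_vt (⟨le_rfl, h.hδ0.le⟩ : (0:ℝ) ∈ Icc (0:ℝ) δ)
  rwa [h.vt_zero] at this

lemma g_anti : StrictAntiOn (vtInv (vt δ Ψ Ψinv)) (Icc 0 1) := by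
  intro v1 h1 v2 h2 h12
  obtain ⟨hm2, he2⟩ := h.vtInv_mem h2
  obtain ⟨hm1, he1⟩ := h.vtInv_mem h1
  by_contra hle
  push_neg at hle
  rcases eq_or_lt_of_le hle with he | hlt
  · rw [← he1, ← he2, he] at h12; exact lt_irrefl _ h12
  · have := h.antiL hm1 hm2 hlt
    rw [he1, he2] at this
    exact absurd h12 (not_lt.2 this.le)

end VTHyp

namespace VTHyp
variable {δ : ℝ} {Ψ Ψinv : ℝ → ℝ} (h : VTHyp δ Ψ Ψinv)
include h

/-- key identity: `v + g v = 1 - (1-δ) Ψ (g v / δ)`. -/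
lemma key_id {v : ℝ} (hv : v ∈ Icc (0:ℝ) 1) :
    v + vtInv (vt δ Ψ Ψinv) v = 1 - (1 - δ) * Ψ (vtInv (vt δ Ψ Ψinv) v / δ) := by
  obtain ⟨hm, he⟩ := h.vtInv_mem hv
  rw [h.vt_left hm.2] at he
  linarith

lemma sum_le_one {v : ℝ} (hv : v ∈ Icc (0:ℝ) 1) :
    v + vtInv (vt δ Ψ Ψinv) v ≤ 1 := by
  rw [h.key_id hv]
  have := (h.psi_mem (h.div_mem (h.vtInv_mem hv).1)).1
  nlinarith [h.hδ1]

lemma sum_ge {v : ℝ} (hv : v ∈ Icc (0:ℝ) 1) :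
    δ ≤ v + vtInv (vt δ Ψ Ψinv) v := by
  rw [h.key_id hv]
  have := (h.psi_mem (h.div_mem (h.vtInv_mem hv).1)).2
  nlinarith [h.hδ1]

lemma sum_gt {v : ℝ} (hv : v ∈ Icc (0:ℝ) 1) (hv0 : 0 < v) :
    δ < v + vtInv (vt δ Ψ Ψinv) v := by
  rw [h.key_id hv]
  have hgm := (h.vtInv_mem hv).1
  have hglt : vtInv (vt δ Ψ Ψinv) v < δ := by
    by_contra hge
    push_neg at hge
    have heq : vtInv (vt δ Ψ Ψinv) v = δ := le_antisymm hgm.2 hge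
    have hveq := (h.vtInv_mem hv).2
    rw [heq, h.vt_delta] at hveq
    exact hv0.ne' hveq.symm
  have hΨlt : Ψ (vtInv (vt δ Ψ Ψinv) v / δ) < 1 := by
    have h1 : vtInv (vt δ Ψ Ψinv) v / δ < 1 := (div_lt_one h.hδ0).2 hglt
    have := h.hΨm (h.div_mem hgm) (by simp) h1
    rwa [h.hΨ1] at this
  nlinarith [h.hδ1]

lemma vt_sum {v : ℝ} (hv : v ∈ Icc (0:ℝ) 1) :
    vt δ Ψ Ψinv (v + vtInv (vt δ Ψ Ψinv) v) = v := by
  rcases eq_or_lt_of_le hv.1 with h0 | h0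
  · rw [← h0, zero_add, h.g_zero, h.vt_delta]
  · have hgt := h.sum_gt hv h0
    rw [h.vt_right (not_le.2 hgt)]
    have hkey := h.key_id hv
    have h1δ : (0:ℝ) < 1 - δ := by linarith [h.hδ1]
    have harg : (1 - (v + vtInv (vt δ Ψ Ψinv) v)) / (1 - δ) = Ψ (vtInv (vt δ Ψ Ψinv) v / δ) := by
      field_simp
      linarith
    rw [harg, (h.hΨinv _ (h.div_mem (h.vtInv_mem hv).1)).1,
      mul_div_cancel₀ _ h.hδ0.ne']
    ring

lemma H_strictMono : StrictMonoOn (fun v => v + vtInv (vt δ Ψ Ψinv) v) (Icc (0:ℝ) 1) := by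
  intro v1 h1 v2 h2 h12
  simp only
  rw [h.key_id h1, h.key_id h2]
  have hg := h.g_anti h1 h2 h12
  have hΨ := h.hΨm (h.div_mem (h.vtInv_mem h2).1) (h.div_mem (h.vtInv_mem h1).1)
    ((div_lt_div_iff_of_pos_right h.hδ0).2 hg)
  have h1δ : (0:ℝ) < 1 - δ := by linarith [h.hδ1]
  nlinarith

lemma psiInv_mem {x : ℝ} (hx : x ∈ Icc (0:ℝ) 1) : Ψinv x ∈ Icc (0:ℝ) 1 := by
  have : ∃ y ∈ Icc (0:ℝ) 1, Ψ y = x := by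
    have := intermediate_value_Icc (zero_le_one) h.hΨc
    rw [h.hΨ0, h.hΨ1] at this
    exact this hx
  obtain ⟨y, hy, hyx⟩ := this
  rw [← hyx, (h.hΨinv y hy).1]
  exact hy

lemma vt_maps {u : ℝ} (hu : u ∈ Icc (0:ℝ) 1) : vt δ Ψ Ψinv u ∈ Icc (0:ℝ) 1 := by
  by_cases hle : u ≤ δ
  · have huδ : u ∈ Icc (0:ℝ) δ := ⟨hu.1, hle⟩
    constructor
    · have := h.vt_delta
      rcases eq_or_lt_of_le hle with he | hlt
      · rw [he, h.vt_delta]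
      · have := h.antiL huδ ⟨h.hδ0.le, le_rfl⟩ hlt
        rw [h.vt_delta] at this; linarith
    · rcases eq_or_lt_of_le hu.1 with he | hlt
      · rw [← he, h.vt_zero]
      · have := h.antiL ⟨le_rfl, h.hδ0.le⟩ huδ hlt
        rw [h.vt_zero] at this; linarith
  · push_neg at hle
    rw [h.vt_right (not_le.2 hle)]
    have h1δ : (0:ℝ) < 1 - δ := by linarith [h.hδ1]
    have harg : (1 - u) / (1 - δ) ∈ Icc (0:ℝ) 1 := by
      constructor
      · exact div_nonneg (by linarith [hu.2]) h1δ.le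
      · rw [div_le_one h1δ]; linarith [hle]
    have := h.psiInv_mem harg
    constructor
    · nlinarith [this.2, h.hδ0, hle]
    · nlinarith [this.1, h.hδ0, hu.2]

lemma vtInv_outside {v : ℝ} (hv : v ∉ Icc (0:ℝ) 1) : vtInv (vt δ Ψ Ψinv) v = 0 := by
  have : {u | u ∈ Icc (0:ℝ) 1 ∧ vt δ Ψ Ψinv u = v} = ∅ := by
    ext u
    simp only [mem_setOf_eq, mem_empty_iff_false, iff_false, not_and]
    intro hu he
    exact hv (he ▸ h.vt_maps hu)
  rw [vtInv, this]
  exact Real.sInf_empty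

/-- continuity of the inverse, via compactness -/
lemma g_contOn : ContinuousOn (vtInv (vt δ Ψ Ψinv)) (Icc (0:ℝ) 1) := by
  have hδ1 : δ ≤ 1 := h.hδ1.le
  set e : Icc (0:ℝ) δ ≃ Icc (0:ℝ) 1 :=
    { toFun := fun u => ⟨vt δ Ψ Ψinv u, h.vt_maps ⟨u.2.1, u.2.2.trans hδ1⟩⟩
      invFun := fun v => ⟨vtInv (vt δ Ψ Ψinv) v, (h.vtInv_mem v.2).1⟩
      left_inv := fun u => Subtype.ext (h.vtInv_vt u.2)
      right_inv := fun v => Subtype.ext (h.vtInv_mem v.2).2 } with he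
  have hec : Continuous (e : Icc (0:ℝ) δ → Icc (0:ℝ) 1) := by
    rw [he]
    apply Continuous.subtype_mk
    exact h.contL.restrict
  have := (Continuous.homeoOfEquivCompactToT2 (f := e) hec).symm.continuous
  rw [continuousOn_iff_continuous_restrict]
  have : Continuous fun v : Icc (0:ℝ) 1 => (e.symm v : ℝ) := continuous_subtype_val.comp this
  convert this using 1
  rfl

lemma g_measurable : Measurable (vtInv (vt δ Ψ Ψinv)) := by
  classical
  have hG : Measurable (fun v : ℝ => vtInv (vt δ Ψ Ψinv) (min (max v 0) 1)) := by
    apply Antitone.measurable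
    intro v1 v2 h12
    have hm1 : min (max v1 0) 1 ∈ Icc (0:ℝ) 1 := ⟨le_min (le_max_right _ _) zero_le_one, min_le_right _ _⟩
    have hm2 : min (max v2 0) 1 ∈ Icc (0:ℝ) 1 := ⟨le_min (le_max_right _ _) zero_le_one, min_le_right _ _⟩
    have hle' : min (max v1 0) 1 ≤ min (max v2 0) 1 :=
      min_le_min (max_le_max h12 le_rfl) le_rfl
    rcases hle'.lt_or_eq with hlt | heq
    · exact (h.g_anti hm1 hm2 hlt).le
    · simp only [heq, le_refl]
  have : vtInv (vt δ Ψ Ψinv) = fun v =>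
      if v ∈ Icc (0:ℝ) 1 then vtInv (vt δ Ψ Ψinv) (min (max v 0) 1) else 0 := by
    funext v
    by_cases hv : v ∈ Icc (0:ℝ) 1
    · rw [if_pos hv, max_eq_left hv.1, min_eq_left hv.2]
    · rw [if_neg hv, h.vtInv_outside hv]
  rw [this]
  exact Measurable.ite measurableSet_Icc hG measurable_const

end VTHyp

/-- derivative of the left branch -/
noncomputable def vtD (δ : ℝ) (Ψ : ℝ → ℝ) (s : ℝ) : ℝ :=
  -1 - (1 - δ) * (deriv Ψ (s / δ) * (1 / δ))

namespace VTHyp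
variable {δ : ℝ} {Ψ Ψinv : ℝ → ℝ} (h : VTHyp δ Ψ Ψinv)
include h

lemma div_mem_Ioo {s : ℝ} (hs : s ∈ Ioo (0:ℝ) δ) : s / δ ∈ Ioo (0:ℝ) 1 :=
  ⟨div_pos hs.1 h.hδ0, (div_lt_one h.hδ0).2 hs.2⟩

lemma vtD_lt {s : ℝ} (hs : s ∈ Ioo (0:ℝ) δ) : vtD δ Ψ s < -1 := by
  have hd := (h.hΨd _ (h.div_mem_Ioo hs)).2
  have h1δ : (0:ℝ) < 1 - δ := by linarith [h.hδ1]
  have h2 : 0 < deriv Ψ (s / δ) * (1 / δ) := mul_pos hd (one_div_pos.2 h.hδ0)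
  have : 0 < (1 - δ) * (deriv Ψ (s / δ) * (1 / δ)) := mul_pos h1δ h2
  rw [vtD]; linarith

lemma hasDerivAt_vt {s : ℝ} (hs : s ∈ Ioo (0:ℝ) δ) :
    HasDerivAt (vt δ Ψ Ψinv) (vtD δ Ψ s) s := by
  have hinner : HasDerivAt (fun u : ℝ => u / δ) (1 / δ) s := by
    simpa using (hasDerivAt_id s).div_const δ
  have houter : HasDerivAt Ψ (deriv Ψ (s / δ)) (s / δ) :=
    ((h.hΨd _ (h.div_mem_Ioo hs)).1).hasDerivAt
  have hcomp : HasDerivAt (fun u : ℝ => Ψ (u / δ)) (deriv Ψ (s / δ) * (1 / δ)) s :=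
    HasDerivAt.comp s houter hinner
  have hL : HasDerivAt (fun u : ℝ => (1 - u) - (1 - δ) * Ψ (u / δ)) (vtD δ Ψ s) s := by
    have h1 : HasDerivAt (fun u : ℝ => 1 - u) (-1) s := by
      simpa using (hasDerivAt_id s).const_sub 1
    exact h1.sub (hcomp.const_mul (1 - δ))
  apply hL.congr_of_eventuallyEq
  filter_upwards [Iio_mem_nhds hs.2] with u hu
  exact h.vt_left (le_of_lt hu)

lemma deriv_vt {s : ℝ} (hs : s ∈ Ioo (0:ℝ) δ) : deriv (vt δ Ψ Ψinv) s = vtD δ Ψ s :=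
  (h.hasDerivAt_vt hs).deriv

lemma g_mem_Ioo {v : ℝ} (hv : v ∈ Ioo (0:ℝ) 1) :
    vtInv (vt δ Ψ Ψinv) v ∈ Ioo (0:ℝ) δ := by
  constructor
  · have := h.g_anti (⟨hv.1.le, hv.2.le⟩ : v ∈ Icc (0:ℝ) 1) (by simp) hv.2
    rwa [h.g_one] at this
  · have := h.g_anti (by simp : (0:ℝ) ∈ Icc (0:ℝ) 1) ⟨hv.1.le, hv.2.le⟩ hv.1
    rwa [h.g_zero] at this

lemma delta_eq {v : ℝ} (hv : v ∈ Ioo (0:ℝ) 1) :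
    vtDelta (vt δ Ψ Ψinv) v = -1 / vtD δ Ψ (vtInv (vt δ Ψ Ψinv) v) := by
  rw [vtDelta, h.deriv_vt (h.g_mem_Ioo hv)]

lemma delta_pos {v : ℝ} (hv : v ∈ Ioo (0:ℝ) 1) : 0 < vtDelta (vt δ Ψ Ψinv) v := by
  rw [h.delta_eq hv]
  have := h.vtD_lt (h.g_mem_Ioo hv)
  exact div_pos_of_neg_of_neg (by norm_num) (by linarith)

lemma delta_lt_one {v : ℝ} (hv : v ∈ Ioo (0:ℝ) 1) : vtDelta (vt δ Ψ Ψinv) v < 1 := by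
  have hlt := h.vtD_lt (h.g_mem_Ioo hv)
  have h0 : 0 < -(vtD δ Ψ (vtInv (vt δ Ψ Ψinv) v)) := by linarith
  rw [h.delta_eq hv]
  have heq : -1 / vtD δ Ψ (vtInv (vt δ Ψ Ψinv) v)
      = 1 / (-(vtD δ Ψ (vtInv (vt δ Ψ Ψinv) v))) := by ring
  rw [heq, div_lt_one h0]
  linarith

lemma hasDerivAt_neg_g {v : ℝ} (hv : v ∈ Ioo (0:ℝ) 1) :
    HasDerivAt (fun x => -(vtInv (vt δ Ψ Ψinv) x)) (vtDelta (vt δ Ψ Ψinv) v) v := by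
  have hgv := h.g_mem_Ioo hv
  have hcont : ContinuousAt (vtInv (vt δ Ψ Ψinv)) v :=
    (h.g_contOn.continuousAt (Icc_mem_nhds hv.1 hv.2))
  have hf : HasDerivAt (vt δ Ψ Ψinv) (vtD δ Ψ (vtInv (vt δ Ψ Ψinv) v)) (vtInv (vt δ Ψ Ψinv) v) :=
    h.hasDerivAt_vt hgv
  have hne : vtD δ Ψ (vtInv (vt δ Ψ Ψinv) v) ≠ 0 := by
    have := h.vtD_lt hgv; linarith
  have hev : ∀ᶠ x in nhds v, vt δ Ψ Ψinv (vtInv (vt δ Ψ Ψinv) x) = x := by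
    filter_upwards [Ioo_mem_nhds hv.1 hv.2] with x hx
    exact (h.vtInv_mem ⟨hx.1.le, hx.2.le⟩).2
  have := (HasDerivAt.of_local_left_inverse hcont hf hne hev).neg
  have heq : -(vtD δ Ψ (vtInv (vt δ Ψ Ψinv) v))⁻¹ = vtDelta (vt δ Ψ Ψinv) v := by
    rw [h.delta_eq hv, neg_div, one_div]
  rwa [heq] at this

lemma delta_measurable : Measurable (vtDelta (vt δ Ψ Ψinv)) := by
  apply Measurable.div measurable_const
  exact (measurable_deriv _).comp h.g_measurable

lemma delta_integrableOn {a b : ℝ} (ha : 0 ≤ a) (hb : b ≤ 1) :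
    IntegrableOn (vtDelta (vt δ Ψ Ψinv)) (Ioc a b) volume := by
  apply Integrable.mono' (integrable_const (1:ℝ))
    h.delta_measurable.aestronglyMeasurable
  rw [Measure.restrict_congr_set Ioo_ae_eq_Ioc.symm]
  filter_upwards [ae_restrict_mem measurableSet_Ioo] with x hx
  have hx01 : x ∈ Ioo (0:ℝ) 1 := ⟨lt_of_le_of_lt ha hx.1, lt_of_lt_of_le hx.2 hb⟩
  rw [Real.norm_eq_abs, abs_of_pos (h.delta_pos hx01)]
  exact (h.delta_lt_one hx01).le

lemma delta_intervalIntegrable {a b : ℝ} (ha : 0 ≤ a) (hab : a ≤ b) (hb : b ≤ 1) :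
    IntervalIntegrable (vtDelta (vt δ Ψ Ψinv)) volume a b := by
  rw [intervalIntegrable_iff_integrableOn_Ioc_of_le hab]
  exact h.delta_integrableOn ha hb

lemma ftc {a b : ℝ} (ha : 0 ≤ a) (hab : a ≤ b) (hb : b ≤ 1) :
    ∫ v in a..b, vtDelta (vt δ Ψ Ψinv) v
      = vtInv (vt δ Ψ Ψinv) a - vtInv (vt δ Ψ Ψinv) b := by
  have := intervalIntegral.integral_eq_sub_of_hasDeriv_right_of_le hab
    (f := fun x => -(vtInv (vt δ Ψ Ψinv) x)) (f' := vtDelta (vt δ Ψ Ψinv))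
    ((h.g_contOn.mono (Icc_subset_Icc ha hb)).neg)
    (fun x hx => (h.hasDerivAt_neg_g
      ⟨lt_of_le_of_lt ha hx.1, lt_of_lt_of_le hx.2 hb⟩).hasDerivWithinAt)
    (h.delta_intervalIntegrable ha hab hb)
  rw [this]; ring

end VTHyp

open ENNReal in
lemma uni_Iic {t : ℝ} (h0 : 0 ≤ t) (h1 : t ≤ 1) :
    (volume.restrict (Icc (0:ℝ) 1)) (Iic t) = ENNReal.ofReal t := by
  rw [Measure.restrict_apply measurableSet_Iic]
  have : Iic t ∩ Icc (0:ℝ) 1 = Icc 0 t := by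
    ext x
    simp only [mem_inter_iff, mem_Iic, mem_Icc]
    exact ⟨fun ⟨a, b, _⟩ => ⟨b, a⟩, fun ⟨a, b⟩ => ⟨b, a, b.trans h1⟩⟩
  rw [this, Real.volume_Icc, sub_zero]

lemma uni_Ioi {t : ℝ} (h0 : 0 ≤ t) (h1 : t ≤ 1) :
    (volume.restrict (Icc (0:ℝ) 1)) (Ioi t) = ENNReal.ofReal (1 - t) := by
  rw [Measure.restrict_apply measurableSet_Ioi]
  have : Ioi t ∩ Icc (0:ℝ) 1 = Ioc t 1 := by
    ext x
    simp only [mem_inter_iff, mem_Ioi, mem_Icc, mem_Ioc]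
    exact ⟨fun ⟨a, _, c⟩ => ⟨a, c⟩, fun ⟨a, b⟩ => ⟨a, (h0.trans a.le), b⟩⟩
  rw [this, Real.volume_Ioc]

lemma uni_univ : (volume.restrict (Icc (0:ℝ) 1)) univ = 1 := by
  rw [Measure.restrict_apply_univ, Real.volume_Icc]
  norm_num

lemma restrict_congr_pts {S T : Set ℝ} (p q : ℝ) (h1 : ∀ x, x ∈ S → x ∉ T → x = p)
    (h2 : ∀ x, x ∈ T → x ∉ S → x = q) : volume.restrict S = volume.restrict T := by
  apply Measure.restrict_congr_set
  rw [MeasureTheory.ae_eq_set]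
  constructor
  · exact measure_mono_null (fun x hx => mem_singleton_iff.2 (h1 x hx.1 hx.2))
      Real.volume_singleton
  · exact measure_mono_null (fun x hx => mem_singleton_iff.2 (h2 x hx.1 hx.2))
      Real.volume_singleton

namespace VTHyp
variable {δ : ℝ} {Ψ Ψinv : ℝ → ℝ} (h : VTHyp δ Ψ Ψinv)
include h

lemma sinv_measurable : Measurable (fun p : ℝ × ℝ => vtSInv (vt δ Ψ Ψinv) p.1 p.2) := by
  unfold vtSInv
  exact Measurable.ite
    (measurableSet_le measurable_snd (h.delta_measurable.comp measurable_fst))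
    (h.g_measurable.comp measurable_fst)
    (measurable_fst.add (h.g_measurable.comp measurable_fst))

lemma inner_eq {v u : ℝ} (hv : v ∈ Ioo (0:ℝ) 1) :
    (volume.restrict (Icc (0:ℝ) 1)) {w | vtSInv (vt δ Ψ Ψinv) v w ≤ u}
      = (if vtInv (vt δ Ψ Ψinv) v ≤ u then ENNReal.ofReal (vtDelta (vt δ Ψ Ψinv) v) else 0)
      + (if v + vtInv (vt δ Ψ Ψinv) v ≤ u
          then ENNReal.ofReal (1 - vtDelta (vt δ Ψ Ψinv) v) else 0) := by
  have hΔ0 := (h.delta_pos hv).le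
  have hΔ1 := (h.delta_lt_one hv).le
  by_cases h1 : vtInv (vt δ Ψ Ψinv) v ≤ u <;>
    by_cases h2 : v + vtInv (vt δ Ψ Ψinv) v ≤ u
  · have hset : {w | vtSInv (vt δ Ψ Ψinv) v w ≤ u} = univ := by
      ext w
      simp only [vtSInv, mem_setOf_eq, mem_univ, iff_true]
      split_ifs with hw
      exacts [h1, h2]
    rw [hset, if_pos h1, if_pos h2, uni_univ, ← ENNReal.ofReal_add hΔ0 (by linarith)]
    norm_num
  · have hset : {w | vtSInv (vt δ Ψ Ψinv) v w ≤ u} = Iic (vtDelta (vt δ Ψ Ψinv) v) := by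
      ext w
      simp only [vtSInv, mem_setOf_eq, mem_Iic]
      constructor
      · intro hle
        by_contra hw
        rw [if_neg hw] at hle
        exact h2 hle
      · intro hw
        rw [if_pos hw]
        exact h1
    rw [hset, if_pos h1, if_neg h2, uni_Iic hΔ0 hΔ1, add_zero]
  · have hset : {w | vtSInv (vt δ Ψ Ψinv) v w ≤ u} = Ioi (vtDelta (vt δ Ψ Ψinv) v) := by
      ext w
      simp only [vtSInv, mem_setOf_eq, mem_Ioi]
      constructor
      · intro hle
        by_contra hw
        push_neg at hw
        rw [if_pos hw] at hle
        exact h1 hle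
      · intro hw
        rw [if_neg (not_le.2 hw)]
        exact h2
    rw [hset, if_neg h1, if_pos h2, uni_Ioi hΔ0 hΔ1, zero_add]
  · have hset : {w | vtSInv (vt δ Ψ Ψinv) v w ≤ u} = ∅ := by
      ext w
      simp only [vtSInv, mem_setOf_eq, mem_empty_iff_false, iff_false]
      intro hle
      split_ifs at hle with hw
      exacts [h1 hle, h2 hle]
    rw [hset, if_neg h1, if_neg h2, measure_empty, add_zero]

/-- the key integral evaluation: `∫⁻ v in Ioc a 1, ofReal (Δ v) = ofReal (g a - g b)` -/
lemma lint_delta {a b : ℝ} (ha : 0 ≤ a) (hab : a ≤ b) (hb : b ≤ 1) :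
    ∫⁻ v in Ioc a b, ENNReal.ofReal (vtDelta (vt δ Ψ Ψinv) v)
      = ENNReal.ofReal (vtInv (vt δ Ψ Ψinv) a - vtInv (vt δ Ψ Ψinv) b) := by
  have hnn : 0 ≤ᵐ[volume.restrict (Ioc a b)] vtDelta (vt δ Ψ Ψinv) := by
    rw [Measure.restrict_congr_set Ioo_ae_eq_Ioc.symm]
    filter_upwards [ae_restrict_mem measurableSet_Ioo] with x hx
    exact (h.delta_pos ⟨lt_of_le_of_lt ha hx.1, lt_of_lt_of_le hx.2 hb⟩).le
  rw [← ofReal_integral_eq_lintegral_ofReal (h.delta_integrableOn ha hb) hnn,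
    ← intervalIntegral.integral_of_le hab, h.ftc ha hab hb]

end VTHyp

namespace VTHyp
variable {δ : ℝ} {Ψ Ψinv : ℝ → ℝ} (h : VTHyp δ Ψ Ψinv)
include h

lemma lint_one_sub_delta {a : ℝ} (ha : 0 ≤ a) (ha1 : a ≤ 1) :
    ∫⁻ v in Ioc 0 a, ENNReal.ofReal (1 - vtDelta (vt δ Ψ Ψinv) v)
      = ENNReal.ofReal (a - (vtInv (vt δ Ψ Ψinv) 0 - vtInv (vt δ Ψ Ψinv) a)) := by
  have hint1 : IntegrableOn (fun _ : ℝ => (1:ℝ)) (Ioc 0 a) volume :=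
    integrableOn_const measure_Ioc_lt_top.ne
  have hintΔ := h.delta_integrableOn (le_refl (0:ℝ)) ha1 (b := a)
  have hint : IntegrableOn (fun v => 1 - vtDelta (vt δ Ψ Ψinv) v) (Ioc 0 a) volume :=
    hint1.sub hintΔ
  have hnn : 0 ≤ᵐ[volume.restrict (Ioc 0 a)]
      (fun v => 1 - vtDelta (vt δ Ψ Ψinv) v) := by
    rw [Measure.restrict_congr_set Ioo_ae_eq_Ioc.symm]
    filter_upwards [ae_restrict_mem measurableSet_Ioo] with x hx
    have := h.delta_lt_one ⟨hx.1, lt_of_lt_of_le hx.2 ha1⟩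
    simp only [Pi.zero_apply]
    linarith
  rw [← ofReal_integral_eq_lintegral_ofReal hint hnn]
  congr 1
  rw [integral_sub hint1 hintΔ]
  have h1 : ∫ _ in Ioc (0:ℝ) a, (1:ℝ) = a := by
    simp [Real.volume_Ioc, ENNReal.toReal_ofReal ha, ha]
  have h2 : ∫ v in Ioc (0:ℝ) a, vtDelta (vt δ Ψ Ψinv) v
      = vtInv (vt δ Ψ Ψinv) 0 - vtInv (vt δ Ψ Ψinv) a := by
    rw [← intervalIntegral.integral_of_le ha, h.ftc (le_refl 0) ha ha1]
  rw [h1, h2]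

end VTHyp

theorem stmt_9 {Ω : Type*} [MeasurableSpace Ω] (P : Measure Ω) [IsProbabilityMeasure P]
    (δ : ℝ) (hδ : δ ∈ Set.Ioo (0:ℝ) 1) (Ψ Ψinv : ℝ → ℝ)
    (hΨc : ContinuousOn Ψ (Set.Icc 0 1)) (hΨm : StrictMonoOn Ψ (Set.Icc 0 1))
    (hΨ0 : Ψ 0 = 0) (hΨ1 : Ψ 1 = 1)
    (hΨinv : ∀ x ∈ Set.Icc (0:ℝ) 1, Ψinv (Ψ x) = x ∧ Ψ (Ψinv x) = x)
    (hΨd : ∀ x ∈ Set.Ioo (0:ℝ) 1, DifferentiableAt ℝ Ψ x ∧ 0 < deriv Ψ x)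
    (V W : Ω → ℝ) (hVm : Measurable V) (hWm : Measurable W)
    (hVu : Measure.map V P = volume.restrict (Set.Icc (0:ℝ) 1))
    (hWu : Measure.map W P = volume.restrict (Set.Icc (0:ℝ) 1))
    (hind : ProbabilityTheory.IndepFun V W P)
    (U : Ω → ℝ) (hU : ∀ ω, U ω = vtSInv (vt δ Ψ Ψinv) (V ω) (W ω)) :
    (∀ᵐ ω ∂P, vt δ Ψ Ψinv (U ω) = V ω) ∧
    Measure.map U P = volume.restrict (Set.Icc (0:ℝ) 1) := by
  have h : VTHyp δ Ψ Ψinv := ⟨hδ, hΨc, hΨm, hΨ0, hΨ1, hΨinv, hΨd⟩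
  have hVae : ∀ᵐ ω ∂P, V ω ∈ Icc (0:ℝ) 1 := by
    rw [ae_iff]
    have hpre : {ω | ¬ V ω ∈ Icc (0:ℝ) 1} = V ⁻¹' (Icc (0:ℝ) 1)ᶜ := rfl
    rw [hpre, ← Measure.map_apply hVm measurableSet_Icc.compl, hVu,
      Measure.restrict_apply measurableSet_Icc.compl]
    simp
  constructor
  · filter_upwards [hVae] with ω hω
    rw [hU ω, vtSInv]
    split_ifs
    · exact (h.vtInv_mem hω).2
    · exact h.vt_sum hω
  · -- uniformity of U
    have hUeq : U = (fun p : ℝ × ℝ => vtSInv (vt δ Ψ Ψinv) p.1 p.2) ∘ (fun ω => (V ω, W ω)) :=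
      funext hU
    have hUm : Measurable U := by
      rw [hUeq]; exact h.sinv_measurable.comp (hVm.prodMk hWm)
    have hprod : Measure.map (fun ω => (V ω, W ω)) P
        = (volume.restrict (Icc (0:ℝ) 1)).prod (volume.restrict (Icc (0:ℝ) 1)) := by
      rw [(ProbabilityTheory.indepFun_iff_map_prod_eq_prod_map_map
        hVm.aemeasurable hWm.aemeasurable).mp hind, hVu, hWu]
    haveI : IsProbabilityMeasure (volume.restrict (Icc (0:ℝ) 1)) := ⟨uni_univ⟩
    haveI : IsProbabilityMeasure (Measure.map U P) := Measure.isProbabilityMeasure_map hUm.aemeasurable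
    apply Measure.ext_of_Iic
    intro u
    rw [Measure.map_apply hUm measurableSet_Iic]
    have hmeasA : MeasurableSet {p : ℝ × ℝ | vtSInv (vt δ Ψ Ψinv) p.1 p.2 ≤ u} :=
      measurableSet_le h.sinv_measurable measurable_const
    have hpre2 : U ⁻¹' (Iic u)
        = (fun ω => (V ω, W ω)) ⁻¹' {p : ℝ × ℝ | vtSInv (vt δ Ψ Ψinv) p.1 p.2 ≤ u} := by
      ext ω; simp [hU ω]
    rw [hpre2, ← Measure.map_apply (hVm.prodMk hWm) hmeasA, hprod,
      Measure.prod_apply hmeasA]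
    have hsec : ∀ v : ℝ, (Prod.mk v ⁻¹' {p : ℝ × ℝ | vtSInv (vt δ Ψ Ψinv) p.1 p.2 ≤ u})
        = {w | vtSInv (vt δ Ψ Ψinv) v w ≤ u} := fun v => rfl
    simp only [hsec]
    set F : ℝ → ENNReal :=
      fun v => (volume.restrict (Icc (0:ℝ) 1)) {w | vtSInv (vt δ Ψ Ψinv) v w ≤ u} with hF
    rw [show ((volume.restrict (Icc (0:ℝ) 1)) : Measure ℝ) = volume.restrict (Ioo (0:ℝ) 1) from
      (Measure.restrict_congr_set Ioo_ae_eq_Icc).symm]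
    have hFeq : ∀ v ∈ Ioo (0:ℝ) 1, F v
        = (if vtInv (vt δ Ψ Ψinv) v ≤ u then ENNReal.ofReal (vtDelta (vt δ Ψ Ψinv) v) else 0)
        + (if v + vtInv (vt δ Ψ Ψinv) v ≤ u
            then ENNReal.ofReal (1 - vtDelta (vt δ Ψ Ψinv) v) else 0) :=
      fun v hv => h.inner_eq hv
    by_cases hu0 : u < 0
    · -- u < 0
      have hL : ∫⁻ v in Ioo (0:ℝ) 1, F v = 0 := by
        rw [setLIntegral_congr_fun measurableSet_Ioo
          (fun v hv => ?_), lintegral_zero]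
        rw [hFeq v hv]
        have hg0 : ¬ vtInv (vt δ Ψ Ψinv) v ≤ u := by
          push_neg
          exact lt_of_lt_of_le hu0 (h.vtInv_mem ⟨hv.1.le, hv.2.le⟩).1.1
        have hs0 : ¬ v + vtInv (vt δ Ψ Ψinv) v ≤ u := by
          push_neg
          calc u < 0 := hu0
          _ < δ := h.hδ0
          _ ≤ v + vtInv (vt δ Ψ Ψinv) v := h.sum_ge ⟨hv.1.le, hv.2.le⟩
        rw [if_neg hg0, if_neg hs0, add_zero]
      rw [hL, Measure.restrict_apply measurableSet_Iic]
      have : Iic u ∩ Ioo (0:ℝ) 1 = ∅ := by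
        ext x
        simp only [mem_inter_iff, mem_Iic, mem_Ioo, mem_empty_iff_false, iff_false, not_and]
        intro hxu hx0
        linarith
      rw [this, measure_empty]
    push_neg at hu0
    by_cases hu1 : 1 < u
    · -- u > 1
      have hL : ∫⁻ v in Ioo (0:ℝ) 1, F v = ∫⁻ _ in Ioo (0:ℝ) 1, (1:ENNReal) := by
        apply setLIntegral_congr_fun measurableSet_Ioo
        intro v hv
        rw [hFeq v hv]
        have hg1 : vtInv (vt δ Ψ Ψinv) v ≤ u :=
          le_trans ((h.vtInv_mem ⟨hv.1.le, hv.2.le⟩).1.2.trans h.hδ1.le) hu1.le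
        have hs1 : v + vtInv (vt δ Ψ Ψinv) v ≤ u :=
          le_trans (h.sum_le_one ⟨hv.1.le, hv.2.le⟩) hu1.le
        rw [if_pos hg1, if_pos hs1,
          ← ENNReal.ofReal_add (h.delta_pos hv).le (by linarith [h.delta_lt_one hv])]
        norm_num
      rw [hL, setLIntegral_one, Measure.restrict_apply measurableSet_Iic]
      have h1 : Iic u ∩ Ioo (0:ℝ) 1 = Ioo (0:ℝ) 1 := by
        apply inter_eq_self_of_subset_right
        intro x hx
        exact le_trans hx.2.le hu1.le
      rw [h1]
    push_neg at hu1
    by_cases huδ : u ≤ δ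
    · -- 0 ≤ u ≤ δ
      have hu01 : u ∈ Icc (0:ℝ) 1 := ⟨hu0, hu1⟩
      set a := vt δ Ψ Ψinv u with ha
      have ha01 : a ∈ Icc (0:ℝ) 1 := h.vt_maps hu01
      have hga : vtInv (vt δ Ψ Ψinv) a = u := h.vtInv_vt ⟨hu0, huδ⟩
      have hL : ∫⁻ v in Ioo (0:ℝ) 1, F v
          = ∫⁻ v in Ioo (0:ℝ) 1,
              (Ici a).indicator (fun v => ENNReal.ofReal (vtDelta (vt δ Ψ Ψinv) v)) v := by
        apply setLIntegral_congr_fun measurableSet_Ioo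
        intro v hv
        rw [hFeq v hv]
        have hs0 : ¬ v + vtInv (vt δ Ψ Ψinv) v ≤ u := by
          push_neg
          exact lt_of_le_of_lt huδ (h.sum_gt ⟨hv.1.le, hv.2.le⟩ hv.1)
        have hiff : vtInv (vt δ Ψ Ψinv) v ≤ u ↔ a ≤ v := by
          constructor
          · intro hle
            by_contra hva
            push_neg at hva
            have := h.g_anti ⟨hv.1.le, hv.2.le⟩ ha01 hva
            rw [hga] at this
            linarith
          · intro hle
            rcases eq_or_lt_of_le hle with he | hlt
            · rw [← he, hga]
            · have := h.g_anti ha01 ⟨hv.1.le, hv.2.le⟩ hlt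
              rw [hga] at this
              exact this.le
        rw [if_neg hs0, add_zero, if_congr hiff rfl rfl]
        simp [Set.indicator_apply]
      rw [hL, lintegral_indicator measurableSet_Ici, Measure.restrict_restrict measurableSet_Ici]
      have hres : volume.restrict (Ici a ∩ Ioo (0:ℝ) 1) = volume.restrict (Ioc a 1) := by
        apply restrict_congr_pts a 1
        · intro x hx hn
          simp only [mem_Ioc, not_and, not_le] at hn
          rcases eq_or_lt_of_le (mem_Ici.1 hx.1) with he | hlt
          · exact he.symm
          · exact absurd (hn hlt) (not_lt.2 hx.2.2.le)
        · intro x hx hn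
          simp only [mem_inter_iff, mem_Ici, mem_Ioo, not_and, not_lt] at hn
          exact le_antisymm hx.2 (hn (hx.1.le) (lt_of_le_of_lt ha01.1 hx.1))
      rw [hres, h.lint_delta ha01.1 ha01.2 le_rfl, hga, h.g_one, sub_zero,
        Measure.restrict_congr_set Ioo_ae_eq_Icc, uni_Iic hu0 hu1]
    · -- δ < u ≤ 1
      push_neg at huδ
      have hHc : ContinuousOn (fun v => v + vtInv (vt δ Ψ Ψinv) v) (Icc (0:ℝ) 1) :=
        (continuous_id.continuousOn).add h.g_contOn
      have hIVT := intermediate_value_Icc zero_le_one hHc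
      rw [show (0:ℝ) + vtInv (vt δ Ψ Ψinv) 0 = δ by rw [h.g_zero, zero_add],
        show (1:ℝ) + vtInv (vt δ Ψ Ψinv) 1 = 1 by rw [h.g_one, add_zero]] at hIVT
      obtain ⟨a, ha01, hHa⟩ := hIVT ⟨huδ.le, hu1⟩
      simp only at hHa
      have hL : ∫⁻ v in Ioo (0:ℝ) 1, F v
          = ∫⁻ v in Ioo (0:ℝ) 1,
              (ENNReal.ofReal (vtDelta (vt δ Ψ Ψinv) v)
               + (Iic a).indicator (fun v => ENNReal.ofReal (1 - vtDelta (vt δ Ψ Ψinv) v)) v) := by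
        apply setLIntegral_congr_fun measurableSet_Ioo
        intro v hv
        rw [hFeq v hv]
        have hg1 : vtInv (vt δ Ψ Ψinv) v ≤ u :=
          le_trans (h.vtInv_mem ⟨hv.1.le, hv.2.le⟩).1.2 huδ.le
        have hiff : v + vtInv (vt δ Ψ Ψinv) v ≤ u ↔ v ≤ a := by
          constructor
          · intro hle
            by_contra hva
            push_neg at hva
            have := h.H_strictMono ha01 ⟨hv.1.le, hv.2.le⟩ hva
            simp only at this
            rw [hHa] at this
            linarith
          · intro hle
            have := h.H_strictMono.monotoneOn ⟨hv.1.le, hv.2.le⟩ ha01 hle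
            rw [hHa] at this
            exact this
        rw [if_pos hg1, if_congr hiff rfl rfl]
        simp [Set.indicator_apply]
      rw [hL, lintegral_add_left h.delta_measurable.ennreal_ofReal]
      have hres1 : volume.restrict (Ioo (0:ℝ) 1) = volume.restrict (Ioc (0:ℝ) 1) := by
        apply restrict_congr_pts 1 1
        · intro x hx hn
          exact absurd ⟨hx.1, hx.2.le⟩ hn
        · intro x hx hn
          simp only [mem_Ioo, not_and, not_lt] at hn
          exact le_antisymm hx.2 (hn hx.1)
      have hpart1 : ∫⁻ v in Ioo (0:ℝ) 1, ENNReal.ofReal (vtDelta (vt δ Ψ Ψinv) v)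
          = ENNReal.ofReal δ := by
        rw [hres1, h.lint_delta le_rfl zero_le_one le_rfl, h.g_zero, h.g_one, sub_zero]
      have hpart2 : ∫⁻ v in Ioo (0:ℝ) 1,
          (Iic a).indicator (fun v => ENNReal.ofReal (1 - vtDelta (vt δ Ψ Ψinv) v)) v
          = ENNReal.ofReal (u - δ) := by
        rw [lintegral_indicator measurableSet_Iic, Measure.restrict_restrict measurableSet_Iic]
        have hres2 : volume.restrict (Iic a ∩ Ioo (0:ℝ) 1) = volume.restrict (Ioc 0 a) := by
          apply restrict_congr_pts 0 1
          · intro x hx hn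
            exact absurd ⟨hx.2.1, hx.1⟩ hn
          · intro x hx hn
            simp only [mem_inter_iff, mem_Iic, mem_Ioo, not_and, not_lt] at hn
            exact le_antisymm (hx.2.trans ha01.2) (hn hx.2 hx.1)
        rw [hres2, h.lint_one_sub_delta ha01.1 ha01.2, h.g_zero]
        congr 1
        linarith
      rw [hpart1, hpart2, ← ENNReal.ofReal_add h.hδ0.le (by linarith),
        Measure.restrict_congr_set Ioo_ae_eq_Icc, uni_Iic hu0 hu1]
      congr 1
      linarith
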